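/- Let (v_k)_{k≥1}, (a_k)_{k≥1}, (b_k)_{k≥1} be nonnegative real sequences with (a_k) non-decreasing. If for every k ≥ 1 one has v_k² ≤ a_k + Σ_{t=1}^k b_t v_t, then for every k ≥ 1 and every 1 ≤ t ≤ k, v_t ≤ √(a_k) + Σ_{i=1}^k b_i. -/

import Mathlib

open Finset

/-- If `(v_k)`, `(a_k)`, `(b_k)` are nonnegative sequences with `(a_k)` non-decreasing and
`v_k² ≤ a_k + ∑_{t=1}^k b_t v_t` for all `k ≥ 1`, then `v_t ≤ √(a_k) + ∑_{i=1}^k b_i` for all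
`1 ≤ t ≤ k`. -/
theorem sequence_square_bound
    (v a b : ℕ → ℝ)
    (hv : ∀ k, 0 ≤ v k) (ha : ∀ k, 0 ≤ a k) (hb : ∀ k, 0 ≤ b k)
    (hamono : ∀ k l, k ≤ l → a k ≤ a l)
    (hrec : ∀ k, 1 ≤ k → v k ^ 2 ≤ a k + ∑ t ∈ Finset.Icc 1 k, b t * v t) :
    ∀ k, 1 ≤ k → ∀ t, 1 ≤ t → t ≤ k →
      v t ≤ Real.sqrt (a k) + ∑ i ∈ Finset.Icc 1 k, b i := by
  intro k hk t ht htk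
  set B := ∑ i ∈ Finset.Icc 1 k, b i with hB
  have hBnn : 0 ≤ B := Finset.sum_nonneg fun i _ => hb i
  obtain ⟨t₀, ht₀mem, ht₀max⟩ :=
    Finset.exists_max_image (Finset.Icc 1 k) v ⟨1, Finset.mem_Icc.mpr ⟨le_refl 1, hk⟩⟩
  obtain ⟨h1, h2⟩ := Finset.mem_Icc.mp ht₀mem
  have hu2 : v t₀ ^ 2 ≤ a k + B * v t₀ := by
    calc v t₀ ^ 2 ≤ a t₀ + ∑ s ∈ Finset.Icc 1 t₀, b s * v s := hrec t₀ h1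
      _ ≤ a k + ∑ s ∈ Finset.Icc 1 t₀, b s * v t₀ := by
          refine add_le_add (hamono _ _ h2) (Finset.sum_le_sum fun s hs => ?_)
          exact mul_le_mul_of_nonneg_left (ht₀max s (Finset.mem_Icc.mpr
            ⟨(Finset.mem_Icc.mp hs).1, le_trans (Finset.mem_Icc.mp hs).2 h2⟩)) (hb s)
      _ ≤ a k + ∑ s ∈ Finset.Icc 1 k, b s * v t₀ := by
          refine add_le_add_right (Finset.sum_le_sum_of_subset_of_nonneg
            (Finset.Icc_subset_Icc_right h2) fun i _ _ => mul_nonneg (hb i) (hv t₀)) _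
      _ = a k + B * v t₀ := by rw [← Finset.sum_mul]
  have key : v t₀ ≤ Real.sqrt (a k) + B := by
    by_contra h
    push_neg at h
    have hs : 0 ≤ Real.sqrt (a k) := Real.sqrt_nonneg _
    have hu0 : 0 < v t₀ := lt_of_le_of_lt (by positivity) h
    have hsq : Real.sqrt (a k) * Real.sqrt (a k) = a k := Real.mul_self_sqrt (ha k)
    nlinarith
  exact le_trans (ht₀max t (Finset.mem_Icc.mpr ⟨ht, htk⟩)) key
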